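/- If a finite-dimensional real Lie algebra g₀ is a contraction of a finite-dimensional real Lie algebra g, then rank(ad*_{g₀}) ≤ rank(ad*_{g}). -/

import Mathlib

open Filter Topology

/-- `bg₀` (a bracket on `W`) is a contraction of `bg` (a bracket on `V`):
there are a set `I ⊆ ℝ` having `0` as an accumulation point and a family of invertible
linear maps `C r : W → V` (`r ∈ I`) such that for all `x y`,
`bg₀ x y = lim_{I ∋ r → 0} (C r)⁻¹ (bg (C r x) (C r y))`. -/
def IsContractionOf {V W : Type*} [AddCommGroup V] [Module ℝ V]
    [AddCommGroup W] [Module ℝ W] [TopologicalSpace W]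
    (bg : V → V → V) (bg₀ : W → W → W) : Prop :=
  ∃ I : Set ℝ, (𝓝[I \ {0}] (0 : ℝ)).NeBot ∧
    ∃ C : ℝ → (W ≃ₗ[ℝ] V), ∀ x y : W,
      Tendsto (fun r => (C r).symm (bg (C r x) (C r y))) (𝓝[I \ {0}] (0 : ℝ)) (𝓝 (bg₀ x y))

/-- For `ξ ∈ g*`, the bilinear form `B^g_ξ (x, y) = ξ ⁅x, y⁆`, as a linear map
`g →ₗ (g →ₗ ℝ)`. -/
noncomputable def coadjointForm {g : Type*} [LieRing g] [LieAlgebra ℝ g]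
    (ξ : Module.Dual ℝ g) : g →ₗ[ℝ] g →ₗ[ℝ] ℝ :=
  LinearMap.mk₂ ℝ (fun x y => ξ ⁅x, y⁆)
    (fun x x' y => by simp only [add_lie, map_add])
    (fun c x y => by simp only [smul_lie, map_smul])
    (fun x y y' => by simp only [lie_add, map_add])
    (fun c x y => by simp only [lie_smul, map_smul])

/-- `rank (ad*_g) = max { rank B^g_ξ : ξ ∈ g* }`. -/
noncomputable def coadjointRank (g : Type*) [LieRing g] [LieAlgebra ℝ g] : ℕ :=
  ⨆ ξ : Module.Dual ℝ g, Module.finrank ℝ (LinearMap.range (coadjointForm ξ))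


open Filter Topology Module

/-- If the matrix `(B (u i) (v j))` has nonzero determinant, then the rank of `B` is at least `m`. -/
lemma le_finrank_range_of_det_ne_zero {V : Type*} [AddCommGroup V] [Module ℝ V]
    [FiniteDimensional ℝ V] (B : V →ₗ[ℝ] V →ₗ[ℝ] ℝ) {m : ℕ} {u v : Fin m → V}
    (hdet : (Matrix.of fun i j => B (u i) (v j)).det ≠ 0) :
    m ≤ Module.finrank ℝ (LinearMap.range B) := by
  classical
  set e : (V →ₗ[ℝ] ℝ) →ₗ[ℝ] (Fin m → ℝ) := LinearMap.pi fun j => LinearMap.applyₗ (v j) with he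
  set ψ : V →ₗ[ℝ] (Fin m → ℝ) := e ∘ₗ B with hψ
  have hrows : LinearIndependent ℝ (fun i => ψ (u i)) := by
    have : (fun i => ψ (u i)) = fun i => (Matrix.of fun i j => B (u i) (v j)) i := rfl
    rw [this]
    exact Matrix.linearIndependent_rows_iff_isUnit.2
      ((Matrix.isUnit_iff_isUnit_det _).2 hdet.isUnit)
  have h1 : m ≤ finrank ℝ (LinearMap.range ψ) := by
    have hspan : Submodule.span ℝ (Set.range fun i => ψ (u i)) ≤ LinearMap.range ψ := by
      rw [Submodule.span_le]
      rintro _ ⟨i, rfl⟩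
      exact ⟨u i, rfl⟩
    calc m = finrank ℝ (Submodule.span ℝ (Set.range fun i => ψ (u i))) := by
            rw [finrank_span_eq_card hrows, Fintype.card_fin]
      _ ≤ finrank ℝ (LinearMap.range ψ) := Submodule.finrank_mono hspan
  refine h1.trans ?_
  rw [hψ, LinearMap.range_comp]
  exact Submodule.finrank_map_le e (LinearMap.range B)

lemma exists_det_ne_zero {V : Type*} [AddCommGroup V] [Module ℝ V] [FiniteDimensional ℝ V]
    (B : V →ₗ[ℝ] V →ₗ[ℝ] ℝ) :
    ∃ u v : Fin (Module.finrank ℝ (LinearMap.range B)) → V,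
      (Matrix.of fun i j => B (u i) (v j)).det ≠ 0 := by
  classical
  set m := Module.finrank ℝ (LinearMap.range B) with hm
  haveI : Module.Free ℝ (LinearMap.range B) := Module.Free.of_divisionRing ℝ (LinearMap.range B)
  let b : Basis (Fin m) ℝ (LinearMap.range B) := Module.finBasis ℝ (LinearMap.range B)
  have hmem : ∀ i, ((b i : V →ₗ[ℝ] ℝ)) ∈ LinearMap.range B := fun i => (b i).2
  choose u hu using fun i => hmem i
  set f : Fin m → (V →ₗ[ℝ] ℝ) := fun i => B (u i) with hf
  have hindep : LinearIndependent ℝ f := by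
    have : f = (LinearMap.range B).subtype ∘ b := by
      funext i; simp [hf, hu i]
    rw [this]
    have := b.linearIndependent
    exact LinearIndependent.map_injOn this (LinearMap.range B).subtype (Subtype.val_injective.injOn)
  have hsurj : Function.Surjective (LinearMap.pi f : V →ₗ[ℝ] (Fin m → ℝ)) := by
    rw [← LinearMap.dualMap_injective_iff]
    rw [← LinearMap.ker_eq_bot, Submodule.eq_bot_iff]
    intro φ hφ
    simp only [LinearMap.mem_ker] at hφ
    set c : Fin m → ℝ := fun i => φ (Pi.single i 1) with hc
    have key : ∀ w : Fin m → ℝ, φ w = ∑ i, w i * c i := by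
      intro w
      conv_lhs => rw [← Finset.univ_sum_single w]
      rw [map_sum]
      congr 1
      funext i
      have : Pi.single i (w i) = (w i) • (Pi.single i (1 : ℝ) : Fin m → ℝ) := by
        rw [← Pi.single_smul, smul_eq_mul, mul_one]
      rw [this, map_smul, smul_eq_mul]
    have hzero : (∑ i, c i • f i) = 0 := by
      refine LinearMap.ext fun w => ?_
      have h0 : φ ((LinearMap.pi f : V →ₗ[ℝ] (Fin m → ℝ)) w) = 0 := by
        have := LinearMap.congr_fun hφ w
        simpa using this
      rw [key _] at h0
      simpa [mul_comm] using h0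
    have hc0 : ∀ i, c i = 0 := by
      have := Fintype.linearIndependent_iff.1 hindep c hzero
      exact this
    refine LinearMap.ext fun w => ?_
    rw [key w]
    simp [hc0]
  choose v hv using fun j => hsurj (Pi.single j 1)
  refine ⟨u, v, ?_⟩
  have : (Matrix.of fun i j => B (u i) (v j)) = (1 : Matrix (Fin m) (Fin m) ℝ) := by
    ext i j
    have := congrFun (hv j) i
    simp only [LinearMap.pi_apply] at this
    simp only [Matrix.of_apply, Matrix.one_apply]
    rw [show B (u i) (v j) = f i (v j) from rfl, this, Pi.single_apply]
  rw [this, Matrix.det_one]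
  exact one_ne_zero

/-- If a finite-dimensional real Lie algebra `g₀` is a contraction of a finite-dimensional
real Lie algebra `g`, then `rank (ad*_{g₀}) ≤ rank (ad*_g)`. -/
theorem coadjointRank_le_of_isContractionOf {g g₀ : Type*}
    [LieRing g] [LieAlgebra ℝ g] [FiniteDimensional ℝ g]
    [LieRing g₀] [LieAlgebra ℝ g₀] [FiniteDimensional ℝ g₀]
    [TopologicalSpace g₀] [IsTopologicalAddGroup g₀] [ContinuousSMul ℝ g₀] [T2Space g₀]
    (h : IsContractionOf (fun x y : g => ⁅x, y⁆) (fun x y : g₀ => ⁅x, y⁆)) :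
    coadjointRank g₀ ≤ coadjointRank g := by
  classical
  obtain ⟨I, hI, C, hC⟩ := h
  have hbdd : BddAbove (Set.range fun η : Module.Dual ℝ g =>
      Module.finrank ℝ (LinearMap.range (coadjointForm η))) := by
    refine ⟨Module.finrank ℝ (Module.Dual ℝ g), ?_⟩
    rintro _ ⟨η, rfl⟩
    exact Submodule.finrank_le _
  refine ciSup_le fun ξ => ?_
  set m := Module.finrank ℝ (LinearMap.range (coadjointForm ξ)) with hm
  obtain ⟨u, v, hdet⟩ := exists_det_ne_zero (coadjointForm ξ)
  have hξc : Continuous ξ := ξ.continuous_of_finiteDimensional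
  set M : ℝ → Matrix (Fin m) (Fin m) ℝ :=
    fun r => Matrix.of fun i j => ξ ((C r).symm ⁅C r (u i), C r (v j)⁆) with hM
  have htend : Tendsto M (𝓝[I \ {0}] (0 : ℝ))
      (𝓝 (Matrix.of fun i j => coadjointForm ξ (u i) (v j))) := by
    apply tendsto_pi_nhds.2
    intro i
    rw [tendsto_pi_nhds]
    intro j
    exact (hξc.tendsto _).comp (hC (u i) (v j))
  have hdtend : Tendsto (fun r => (M r).det) (𝓝[I \ {0}] (0 : ℝ))
      (𝓝 ((Matrix.of fun i j => coadjointForm ξ (u i) (v j)).det)) :=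
    ((Continuous.matrix_det continuous_id).tendsto _).comp htend
  have hev : ∀ᶠ r in 𝓝[I \ {0}] (0 : ℝ), (M r).det ≠ 0 := hdtend.eventually_ne hdet
  obtain ⟨r, hr⟩ := hev.exists
  set η : Module.Dual ℝ g := ξ ∘ₗ ((C r).symm : g →ₗ[ℝ] g₀) with hη
  have hMr : M r = Matrix.of fun i j => coadjointForm η (C r (u i)) (C r (v j)) := rfl
  rw [hMr] at hr
  have := le_finrank_range_of_det_ne_zero (coadjointForm η) hr
  exact this.trans (le_ciSup hbdd η)
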